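/- For all real numbers β₁, β₂ with 0 < β₁ < β₂, letting x₁ denote the unique positive zero of F_{β₁,β₂}, the function F_{β₁,β₂} is strictly negative on the open interval (0, x₁) and strictly positive on (x₁, ∞). -/

import Mathlib

/-- Hamilton football angle function: `F β₁ β₂ x = β₁x − 1 + (β₂x + 1) e^{−x(β₁+β₂)}`. -/
noncomputable def F (β₁ β₂ x : ℝ) : ℝ :=
  β₁ * x - 1 + (β₂ * x + 1) * Real.exp (-x * (β₁ + β₂))

lemma exp_neg_lt_quad {t : ℝ} (ht : 0 < t) : Real.exp (-t) < 1 - t + t^2/2 := by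
  set g : ℝ → ℝ := fun t => 1 - t + t^2/2 - Real.exp (-t) with hg
  have hd : ∀ u : ℝ, HasDerivAt g (-1 + u + Real.exp (-u)) u := by
    intro u
    have h1 : HasDerivAt (fun t : ℝ => Real.exp (-t)) (-Real.exp (-u)) u := by
      simpa [Function.comp_def] using (Real.hasDerivAt_exp (-u)).comp u (hasDerivAt_neg u)
    have h2 : HasDerivAt (fun t : ℝ => 1 - t + t^2/2) (-1 + u) u := by
      have := ((hasDerivAt_const u (1:ℝ)).sub (hasDerivAt_id u)).add
        ((hasDerivAt_pow 2 u).div_const 2)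
      refine this.congr_deriv ?_
      ring
    have := h2.sub h1
    refine this.congr_deriv ?_
    ring
  have hmono : StrictMonoOn g (Set.Ici 0) := by
    apply strictMonoOn_of_deriv_pos (convex_Ici 0)
    · exact Continuous.continuousOn (by fun_prop)
    · intro u hu
      rw [interior_Ici] at hu
      rw [(hd u).deriv]
      have := Real.add_one_lt_exp (x := -u) (by simp; linarith [hu.out] : (-u : ℝ) ≠ 0)
      linarith
  have := hmono Set.self_mem_Ici (Set.mem_Ici.mpr ht.le) ht
  simp only [hg, Real.exp_zero, neg_zero] at this
  norm_num at this
  linarith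

lemma F_cont (β₁ β₂ : ℝ) : Continuous (F β₁ β₂) := by
  unfold F; fun_prop

lemma F_neg_small (β₁ β₂ : ℝ) (h₁ : 0 < β₁) (h₂ : β₁ < β₂) {c : ℝ} (hc : 0 < c)
    (hcle : 2 * β₂ * (β₁ + β₂) * c ≤ β₂ - β₁) : F β₁ β₂ c < 0 := by
  have hs : 0 < β₁ + β₂ := by linarith
  have ht : 0 < (β₁ + β₂) * c := mul_pos hs hc
  have hexp := exp_neg_lt_quad ht
  have hfac : 0 < β₂ * c + 1 := by nlinarith
  have key : (β₂ * c + 1) * Real.exp (-((β₁+β₂)*c)) <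
      (β₂ * c + 1) * (1 - (β₁+β₂)*c + ((β₁+β₂)*c)^2/2) :=
    mul_lt_mul_of_pos_left hexp hfac
  have hre : -c * (β₁ + β₂) = -((β₁+β₂)*c) := by ring
  have hq : (0:ℝ) ≤ (β₁+β₂) * c^2 := by positivity
  unfold F
  rw [hre]
  nlinarith [key, hq, mul_le_mul_of_nonneg_left hcle hq]

theorem sign_of_F (β₁ β₂ x₁ : ℝ) (h₁ : 0 < β₁) (h₂ : β₁ < β₂)
    (hx₁ : 0 < x₁) (hz : F β₁ β₂ x₁ = 0)
    (huniq : ∀ y : ℝ, 0 < y → F β₁ β₂ y = 0 → y = x₁) :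
    (∀ x ∈ Set.Ioo 0 x₁, F β₁ β₂ x < 0) ∧
    (∀ x ∈ Set.Ioi x₁, 0 < F β₁ β₂ x) := by
  have hs : 0 < β₁ + β₂ := by linarith
  have hcont := F_cont β₁ β₂
  constructor
  · rintro x ⟨hx0, hxx₁⟩
    by_contra h
    push_neg at h
    rcases h.lt_or_eq with hpos | heq
    · obtain ⟨c, hcdef⟩ : ∃ c, c = min (x/2) ((β₂ - β₁) / (2 * β₂ * (β₁ + β₂))) := ⟨_, rfl⟩
      have hden : 0 < 2 * β₂ * (β₁ + β₂) := by nlinarith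
      have hc0 : 0 < c := hcdef ▸ lt_min (by linarith) (div_pos (by linarith) hden)
      have hcx : c < x := hcdef ▸ lt_of_le_of_lt (min_le_left _ _) (by linarith)
      have hcle : 2 * β₂ * (β₁ + β₂) * c ≤ β₂ - β₁ := by
        have hm : c ≤ (β₂ - β₁) / (2 * β₂ * (β₁ + β₂)) :=
          hcdef ▸ min_le_right (x/2) ((β₂ - β₁) / (2 * β₂ * (β₁ + β₂)))
        calc 2 * β₂ * (β₁ + β₂) * c
            ≤ 2 * β₂ * (β₁ + β₂) * ((β₂ - β₁) / (2 * β₂ * (β₁ + β₂))) :=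
              mul_le_mul_of_nonneg_left hm hden.le
          _ = β₂ - β₁ := by field_simp [show β₂ ≠ 0 by linarith, show β₁ + β₂ ≠ 0 by linarith]
      have hFc : F β₁ β₂ c < 0 := F_neg_small β₁ β₂ h₁ h₂ hc0 hcle
      have hsub : Set.Icc (F β₁ β₂ c) (F β₁ β₂ x) ⊆ F β₁ β₂ '' Set.Icc c x :=
        intermediate_value_Icc hcx.le hcont.continuousOn
      obtain ⟨y, hy, hFy⟩ := hsub ⟨hFc.le, hpos.le⟩
      have hy0 : 0 < y := lt_of_lt_of_le hc0 hy.1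
      have hyeq := huniq y hy0 hFy
      have hylt : y < x₁ := lt_of_le_of_lt hy.2 hxx₁
      exact absurd hyeq (ne_of_lt hylt)
    · exact absurd (huniq x hx0 heq.symm) (ne_of_lt hxx₁)
  · intro x hx
    have hxx₁ : x₁ < x := hx
    have hx0 : 0 < x := hx₁.trans hxx₁
    by_contra h
    push_neg at h
    rcases h.lt_or_eq with hneg | heq
    · obtain ⟨b, hbdef⟩ : ∃ b, b = x + 1/β₁ + 1 := ⟨_, rfl⟩
      have hinv : β₁ * (1/β₁) = 1 := by field_simp
      have hpos : 0 < 1/β₁ := by positivity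
      have hxb : x < b := by rw [hbdef]; linarith
      have hb0 : 0 < b := hx0.trans hxb
      have hFb : 0 < F β₁ β₂ b := by
        unfold F
        have hexp : 0 < Real.exp (-b*(β₁+β₂)) := Real.exp_pos _
        have hfac : 0 < β₂ * b + 1 := by nlinarith
        have h1 : 0 < β₁ * b - 1 := by
          have hbb : β₁ * b = β₁ * x + β₁ * (1/β₁) + β₁ := by rw [hbdef]; ring
          nlinarith [mul_pos h₁ hx0]
        nlinarith [mul_pos hfac hexp]
      have hsub : Set.Icc (F β₁ β₂ x) (F β₁ β₂ b) ⊆ F β₁ β₂ '' Set.Icc x b :=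
        intermediate_value_Icc hxb.le hcont.continuousOn
      obtain ⟨y, hy, hFy⟩ := hsub ⟨hneg.le, hFb.le⟩
      have hy0 : 0 < y := lt_of_lt_of_le hx0 hy.1
      have hyeq := huniq y hy0 hFy
      have hygt : x₁ < y := lt_of_lt_of_le hxx₁ hy.1
      exact absurd hyeq (ne_of_gt hygt)
    · exact absurd (huniq x hx0 heq) (ne_of_gt hxx₁)
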